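/- For x > 0 define w(x) = e^{1/(2x²)} · ∫_0^x e^{-1/(2t²)} · t^{-2} dt (the integrand extended by 0 at t = 0), and for k ∈ ℕ let (2k−1)!! = ∏_{j=1}^{k} (2j−1) (with (−1)!! = 1). Then for every x > 0 and every natural number N, 0 ≤ (−1)^N · ( w(x) − ∑_{k=0}^{N-1} (−1)^k · (2k−1)!! · x^{2k+1} ) ≤ (2N−1)!! · x^{2N+1}. -/

import Mathlib

/-- The double factorial `(2k-1)!! = 1·3·5⋯(2k-1)`, with `(-1)!! = 1` for `k = 0`. -/
def oddDoubleFactorial (k : ℕ) : ℝ := ∏ j ∈ Finset.range k, (2 * (j : ℝ) + 1)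

open MeasureTheory Set

noncomputable def eg (k : ℕ) (t : ℝ) : ℝ := Real.exp (-1 / (2 * t ^ 2)) * (t ^ 2) ^ k / t ^ 2

noncomputable def eF (k : ℕ) (t : ℝ) : ℝ := t ^ (2 * k + 1) * Real.exp (-1 / (2 * t ^ 2))

lemma eg_nonneg (k : ℕ) (t : ℝ) : 0 ≤ eg k t := by unfold eg; positivity

lemma exp_neg_le (u : ℝ) (hu : 0 < u) : Real.exp (-u) ≤ 4 / u ^ 2 := by
  have h1 : u / 2 + 1 ≤ Real.exp (u / 2) := by
    have := Real.add_one_le_exp (u / 2); linarith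
  have h2 : Real.exp (u / 2) * Real.exp (u / 2) = Real.exp u := by
    rw [← Real.exp_add]; ring_nf
  have hge : u ^ 2 / 4 ≤ Real.exp u := by nlinarith [Real.exp_pos (u / 2)]
  have hE : Real.exp (-u) * Real.exp u = 1 := by rw [← Real.exp_add]; simp
  rw [le_div_iff₀ (by positivity : (0:ℝ) < u ^ 2)]
  nlinarith [Real.exp_pos (-u), mul_le_mul_of_nonneg_left hge (Real.exp_pos (-u)).le]

lemma eg_le (k : ℕ) (t : ℝ) : eg k t ≤ 16 * (t ^ 2) ^ (k + 1) := by
  rcases eq_or_ne t 0 with rfl | ht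
  · simp [eg]
  · have ht2 : (0:ℝ) < t ^ 2 := by positivity
    have h1 : Real.exp (-1 / (2 * t ^ 2)) ≤ 16 * (t ^ 2) ^ 2 := by
      have h := exp_neg_le (1 / (2 * t ^ 2)) (by positivity)
      rw [neg_div]
      calc Real.exp (-(1 / (2 * t ^ 2))) ≤ 4 / (1 / (2 * t ^ 2)) ^ 2 := h
        _ = 16 * (t ^ 2) ^ 2 := by field_simp; ring
    have hk : (0:ℝ) ≤ (t ^ 2) ^ k := by positivity
    calc eg k t = Real.exp (-1 / (2 * t ^ 2)) * (t ^ 2) ^ k / t ^ 2 := rfl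
      _ ≤ (16 * (t ^ 2) ^ 2) * (t ^ 2) ^ k / t ^ 2 := by gcongr
      _ = 16 * (t ^ 2) ^ (k + 1) := by field_simp; ring

lemma eg_continuous (k : ℕ) : Continuous (eg k) := by
  rw [continuous_iff_continuousAt]
  intro t
  rcases eq_or_ne t 0 with rfl | ht
  · have h0 : eg k 0 = 0 := by simp [eg]
    unfold ContinuousAt
    rw [h0]
    apply squeeze_zero (fun t => eg_nonneg k t) (fun t => eg_le k t)
    have hc : Continuous fun t : ℝ => 16 * (t ^ 2) ^ (k + 1) := by continuity
    simpa using hc.tendsto 0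
  · have h2 : (t ^ 2 : ℝ) ≠ 0 := pow_ne_zero 2 ht
    have h2' : (2 * t ^ 2 : ℝ) ≠ 0 := by positivity
    have hc0 : ContinuousAt (fun t : ℝ => -1 / (2 * t ^ 2)) t :=
      continuousAt_const.div ((continuous_const.mul (continuous_pow 2)).continuousAt) h2'
    have hcE : ContinuousAt (fun t : ℝ => Real.exp (-1 / (2 * t ^ 2))) t :=
      Real.continuous_exp.continuousAt.comp hc0
    exact (hcE.mul (((continuous_pow 2).pow k).continuousAt)).div
      ((continuous_pow 2).continuousAt) h2

lemma eF_continuous (k : ℕ) : Continuous (eF k) := by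
  rw [continuous_iff_continuousAt]
  intro t
  rcases eq_or_ne t 0 with rfl | ht
  · have h0 : eF k 0 = 0 := by simp [eF]
    unfold ContinuousAt
    rw [h0]
    refine squeeze_zero_norm (a := fun t : ℝ => |t| ^ (2 * k + 1)) ?_ ?_
    · intro t
      have hb : Real.exp (-1 / (2 * t ^ 2)) ≤ 1 := by
        rw [Real.exp_le_one_iff]
        rcases eq_or_ne t 0 with rfl | ht
        · norm_num
        · have : (0:ℝ) < 2 * t ^ 2 := by positivity
          rw [neg_div]
          simp only [Left.neg_nonpos_iff]
          positivity
      have : ‖eF k t‖ = |t| ^ (2 * k + 1) * Real.exp (-1 / (2 * t ^ 2)) := by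
        rw [eF, norm_mul]
        simp [abs_pow, Real.abs_exp]
      rw [this]
      nlinarith [abs_nonneg t, pow_nonneg (abs_nonneg t) (2 * k + 1), Real.exp_pos (-1 / (2 * t ^ 2))]
    · have hc : Continuous fun t : ℝ => |t| ^ (2 * k + 1) := by continuity
      simpa [zero_pow (Nat.succ_ne_zero (2 * k))] using hc.tendsto 0
  · have h2' : (2 * t ^ 2 : ℝ) ≠ 0 := by positivity
    have hc0 : ContinuousAt (fun t : ℝ => -1 / (2 * t ^ 2)) t :=
      continuousAt_const.div ((continuous_const.mul (continuous_pow 2)).continuousAt) h2'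
    have hcE : ContinuousAt (fun t : ℝ => Real.exp (-1 / (2 * t ^ 2))) t :=
      Real.continuous_exp.continuousAt.comp hc0
    exact ((continuous_pow (2 * k + 1)).continuousAt).mul hcE

lemma eF_hasDeriv (k : ℕ) {t : ℝ} (ht : t ≠ 0) :
    HasDerivAt (eF k) (eg k t + (2 * k + 1) * eg (k + 1) t) t := by
  have h2 : (2 * t ^ 2 : ℝ) ≠ 0 := by positivity
  have hd1 : HasDerivAt (fun t : ℝ => 2 * t ^ 2) (2 * (2 * t)) t := by
    simpa using (hasDerivAt_pow 2 t).const_mul 2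
  have hd2 : HasDerivAt (fun t : ℝ => -1 / (2 * t ^ 2))
      ((0 * (2 * t ^ 2) - (-1) * (2 * (2 * t))) / (2 * t ^ 2) ^ 2) t :=
    (hasDerivAt_const t (-1 : ℝ)).div hd1 h2
  have hd3 := hd2.exp
  have hd4 : HasDerivAt (fun t : ℝ => t ^ (2 * k + 1)) ((2 * k + 1) * t ^ (2 * k)) t := by
    have := hasDerivAt_pow (2 * k + 1) t
    simpa using this
  have hd5 := hd4.mul hd3
  refine hd5.congr_deriv ?_
  unfold eg
  field_simp
  ring

lemma eg_intervalIntegrable (j : ℕ) (x : ℝ) : IntervalIntegrable (eg j) volume 0 x :=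
  (eg_continuous j).intervalIntegrable 0 x

lemma key (k : ℕ) {x : ℝ} (hx : 0 < x) :
    ∫ t in Ioo (0:ℝ) x, eg k t =
      x ^ (2 * k + 1) * Real.exp (-1 / (2 * x ^ 2)) -
        (2 * k + 1) * ∫ t in Ioo (0:ℝ) x, eg (k + 1) t := by
  have hint : IntervalIntegrable (fun t => eg k t + (2 * k + 1) * eg (k + 1) t) volume 0 x :=
    (eg_intervalIntegrable k x).add ((eg_intervalIntegrable (k + 1) x).const_mul _)
  have h := intervalIntegral.integral_eq_sub_of_hasDerivAt_of_le hx.le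
    ((eF_continuous k).continuousOn)
    (fun t htm => eF_hasDeriv k (ne_of_gt htm.1)) hint
  have hF0 : eF k 0 = 0 := by simp [eF]
  rw [hF0, sub_zero] at h
  rw [intervalIntegral.integral_add (eg_intervalIntegrable k x)
      ((eg_intervalIntegrable (k + 1) x).const_mul _),
    intervalIntegral.integral_const_mul] at h
  have conv : ∀ j : ℕ, (∫ t in (0:ℝ)..x, eg j t) = ∫ t in Ioo (0:ℝ) x, eg j t := by
    intro j
    rw [intervalIntegral.integral_of_le hx.le, MeasureTheory.integral_Ioc_eq_integral_Ioo]
  rw [conv, conv] at h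
  have : eF k x = x ^ (2 * k + 1) * Real.exp (-1 / (2 * x ^ 2)) := rfl
  linarith [h]

lemma eg_integral_nonneg (j : ℕ) (x : ℝ) : 0 ≤ ∫ t in Ioo (0:ℝ) x, eg j t :=
  MeasureTheory.setIntegral_nonneg measurableSet_Ioo (fun t _ => eg_nonneg j t)

lemma odf_nonneg (k : ℕ) : 0 ≤ oddDoubleFactorial k :=
  Finset.prod_nonneg fun j _ => by positivity

lemma sum_identity {x : ℝ} (hx : 0 < x) (N : ℕ) :
    (Real.exp (1 / (2 * x ^ 2)) * ∫ t in Ioo (0:ℝ) x, eg 0 t) -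
        ∑ k ∈ Finset.range N, (-1 : ℝ) ^ k * oddDoubleFactorial k * x ^ (2 * k + 1) =
      (-1 : ℝ) ^ N * oddDoubleFactorial N *
        (Real.exp (1 / (2 * x ^ 2)) * ∫ t in Ioo (0:ℝ) x, eg N t) := by
  induction N with
  | zero => simp [oddDoubleFactorial]
  | succ n ih =>
    rw [Finset.sum_range_succ]
    have hkey := key n hx
    have hE : Real.exp (1 / (2 * x ^ 2)) * Real.exp (-1 / (2 * x ^ 2)) = 1 := by
      rw [← Real.exp_add]; ring_nf; exact Real.exp_zero
    have hD : oddDoubleFactorial (n + 1) = oddDoubleFactorial n * (2 * (n:ℝ) + 1) :=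
      Finset.prod_range_succ _ n
    rw [hD]
    linear_combination ih + ((-1:ℝ) ^ n * oddDoubleFactorial n * Real.exp (1 / (2 * x ^ 2))) * hkey
      + ((-1:ℝ) ^ n * oddDoubleFactorial n * x ^ (2 * n + 1)) * hE

/-- The asymptotic series of §29: the partial sums of
`x - 1·x³ + 1·3·x⁵ - 1·3·5·x⁷ + ⋯` are alternately below and above
`w(x) = e^{1/(2x²)} ∫_0^x e^{-1/(2t²)} t^{-2} dt`, the error being bounded by the first
omitted term. -/
theorem euler_asymptotic_error_bound :
    ∀ x : ℝ, 0 < x → ∀ N : ℕ,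
      0 ≤ (-1 : ℝ) ^ N *
          ((Real.exp (1 / (2 * x ^ 2)) *
              ∫ t in Set.Ioo (0 : ℝ) x, Real.exp (-1 / (2 * t ^ 2)) / t ^ 2) -
            ∑ k ∈ Finset.range N, (-1 : ℝ) ^ k * oddDoubleFactorial k * x ^ (2 * k + 1)) ∧
      (-1 : ℝ) ^ N *
          ((Real.exp (1 / (2 * x ^ 2)) *
              ∫ t in Set.Ioo (0 : ℝ) x, Real.exp (-1 / (2 * t ^ 2)) / t ^ 2) -
            ∑ k ∈ Finset.range N, (-1 : ℝ) ^ k * oddDoubleFactorial k * x ^ (2 * k + 1)) ≤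
        oddDoubleFactorial N * x ^ (2 * N + 1) := by
  intro x hx N
  have hconv : (∫ t in Set.Ioo (0:ℝ) x, Real.exp (-1 / (2 * t ^ 2)) / t ^ 2) =
      ∫ t in Set.Ioo (0:ℝ) x, eg 0 t := by simp [eg]
  rw [hconv, sum_identity hx N]
  have hsq : ((-1:ℝ) ^ N) * ((-1:ℝ) ^ N) = 1 := by rw [← mul_pow]; norm_num
  have hrw : (-1:ℝ) ^ N * ((-1:ℝ) ^ N * oddDoubleFactorial N *
      (Real.exp (1 / (2 * x ^ 2)) * ∫ t in Ioo (0:ℝ) x, eg N t)) =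
      oddDoubleFactorial N * (Real.exp (1 / (2 * x ^ 2)) * ∫ t in Ioo (0:ℝ) x, eg N t) := by
    linear_combination (oddDoubleFactorial N *
      (Real.exp (1 / (2 * x ^ 2)) * ∫ t in Ioo (0:ℝ) x, eg N t)) * hsq
  rw [hrw]
  have hIN1 := eg_integral_nonneg (N + 1) x
  have hEpos := Real.exp_pos (1 / (2 * x ^ 2))
  constructor
  · exact mul_nonneg (odf_nonneg N) (mul_nonneg hEpos.le (eg_integral_nonneg N x))
  · have hkey := key N hx
    have hE : Real.exp (1 / (2 * x ^ 2)) * Real.exp (-1 / (2 * x ^ 2)) = 1 := by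
      rw [← Real.exp_add]; ring_nf; exact Real.exp_zero
    have h5 : Real.exp (1 / (2 * x ^ 2)) * (∫ t in Ioo (0:ℝ) x, eg N t) =
        x ^ (2 * N + 1) - (2 * N + 1) *
          (Real.exp (1 / (2 * x ^ 2)) * ∫ t in Ioo (0:ℝ) x, eg (N + 1) t) := by
      linear_combination Real.exp (1 / (2 * x ^ 2)) * hkey + x ^ (2 * N + 1) * hE
    have hterm : (0:ℝ) ≤ (2 * N + 1) *
        (Real.exp (1 / (2 * x ^ 2)) * ∫ t in Ioo (0:ℝ) x, eg (N + 1) t) := by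
      have : (0:ℝ) ≤ 2 * N + 1 := by positivity
      exact mul_nonneg this (mul_nonneg hEpos.le hIN1)
    have h6 : Real.exp (1 / (2 * x ^ 2)) * (∫ t in Ioo (0:ℝ) x, eg N t) ≤ x ^ (2 * N + 1) := by
      linarith
    exact mul_le_mul_of_nonneg_left h6 (odf_nonneg N)
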